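/- Let A ∈ Mat_{n×n}(ℝ) be skew-symmetric. For ξ,η ∈ ℝ^n define the 2n×2n matrix Π(ξ,η) = (1/4)·[[D_ξ A D_ξ, D_ξ A D_η],[D_η A D_ξ, D_η A D_η]]. For any ξ_0,η_0 ∈ ℝ^n, let M = [[D_{ξ_0}, −D_{η_0}],[D_{η_0}, D_{ξ_0}]] be the matrix of the linear map (ξ,η) ↦ (ξ_0∘ξ − η_0∘η, η_0∘ξ + ξ_0∘η), where ∘ denotes componentwise multiplication. Then for all ξ,η ∈ ℝ^n, M · Π(ξ,η) · M^t = Π(ξ_0∘ξ − η_0∘η, η_0∘ξ + ξ_0∘η). (Hence the componentwise multiplication action of (ℂ^*)^n on ℂ^n is a Poisson action for the quadratic Poisson structure Π.) -/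
import Mathlib

open Matrix

noncomputable section

/-- The quadratic Poisson bivector `Π(ξ,η)` on `ℝ^{2n} ≅ ℂ^n` associated to a
skew-symmetric matrix `A`:
`Π(ξ,η) = (1/4)[[D_ξ A D_ξ, D_ξ A D_η],[D_η A D_ξ, D_η A D_η]]`. -/
def PiC {N : ℕ} (A : Matrix (Fin N) (Fin N) ℝ) (ξ η : Fin N → ℝ) :
    Matrix (Fin N ⊕ Fin N) (Fin N ⊕ Fin N) ℝ :=
  (1 / 4 : ℝ) • Matrix.fromBlocks
    (Matrix.diagonal ξ * A * Matrix.diagonal ξ) (Matrix.diagonal ξ * A * Matrix.diagonal η)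
    (Matrix.diagonal η * A * Matrix.diagonal ξ) (Matrix.diagonal η * A * Matrix.diagonal η)

/-- `Π(ξ,η)` factors as `(1/4) P B Q` with `P = [[D_ξ,0],[D_η,0]]`,
`B = [[A,A],[0,0]]`, `Q = [[D_ξ,D_η],[0,0]]`. -/
lemma piC_factor {N : ℕ} (A : Matrix (Fin N) (Fin N) ℝ) (ξ η : Fin N → ℝ) :
    PiC A ξ η = (1 / 4 : ℝ) •
      (Matrix.fromBlocks (Matrix.diagonal ξ) 0 (Matrix.diagonal η) 0 *
        Matrix.fromBlocks A A 0 0 *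
        Matrix.fromBlocks (Matrix.diagonal ξ) (Matrix.diagonal η) 0 0) := by
  simp [PiC, Matrix.fromBlocks_multiply, Matrix.mul_assoc]

/-- The componentwise multiplication action of `(ℂ^*)^n` on `ℂ^n` is Poisson for `Π`:
with `M = [[D_{ξ₀}, -D_{η₀}],[D_{η₀}, D_{ξ₀}]]`,
`M Π(ξ,η) Mᵀ = Π(ξ₀∘ξ - η₀∘η, η₀∘ξ + ξ₀∘η)`. -/
theorem stmt16 {N : ℕ} (A : Matrix (Fin N) (Fin N) ℝ) (hA : Aᵀ = -A)
    (ξ₀ η₀ : Fin N → ℝ)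
    (M : Matrix (Fin N ⊕ Fin N) (Fin N ⊕ Fin N) ℝ)
    (hM : M = Matrix.fromBlocks (Matrix.diagonal ξ₀) (-Matrix.diagonal η₀)
      (Matrix.diagonal η₀) (Matrix.diagonal ξ₀)) :
    ∀ ξ η : Fin N → ℝ,
      M * PiC A ξ η * Mᵀ =
        PiC A (fun i => ξ₀ i * ξ i - η₀ i * η i) (fun i => η₀ i * ξ i + ξ₀ i * η i) := by
  intro ξ η
  subst hM
  rw [piC_factor, piC_factor]
  rw [Matrix.mul_smul, Matrix.smul_mul]
  congr 1
  rw [show ∀ (P B Q Mt M : Matrix (Fin N ⊕ Fin N) (Fin N ⊕ Fin N) ℝ),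
      M * (P * B * Q) * Mt = (M * P) * B * (Q * Mt) from fun _ _ _ _ _ => by
    simp only [Matrix.mul_assoc]]
  congr 1
  · congr 1
    simp only [Matrix.fromBlocks_multiply, Matrix.diagonal_mul_diagonal, Matrix.mul_zero,
      Matrix.zero_mul, add_zero, zero_add, Matrix.neg_mul, Matrix.diagonal_neg]
    simp [sub_eq_add_neg, mul_comm]
  · simp only [Matrix.fromBlocks_transpose, Matrix.diagonal_transpose, Matrix.transpose_neg,
      Matrix.fromBlocks_multiply, Matrix.diagonal_mul_diagonal, Matrix.mul_zero,
      Matrix.zero_mul, add_zero, zero_add, Matrix.mul_neg, Matrix.diagonal_neg]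
    simp [sub_eq_add_neg, mul_comm]
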